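/- For 1 ≤ k ≤ n, the sum over j ≥ 0 of C(k-1,j)/C(n,j) equals (n+1)/(n+2-k). -/

import Mathlib

theorem choose_ratio_sum (n k : ℕ) (hk1 : 1 ≤ k) (hkn : k ≤ n) :
    (∑ j ∈ Finset.range (n + 1),
        (Nat.choose (k - 1) j : ℚ) / (Nat.choose n j : ℚ)) =
      ((n : ℚ) + 1) / ((n : ℚ) + 2 - (k : ℚ)) := by
  obtain ⟨m, rfl⟩ : ∃ m, k = m + 1 := ⟨k - 1, (Nat.succ_pred_eq_of_pos hk1).symm⟩
  have hmn : m ≤ n := Nat.le_of_succ_le hkn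
  simp only [Nat.add_sub_cancel]
  -- restrict the sum to range (m+1)
  have h1 : (∑ j ∈ Finset.range (n + 1),
      (Nat.choose m j : ℚ) / (Nat.choose n j : ℚ)) =
      ∑ j ∈ Finset.range (m + 1), (Nat.choose m j : ℚ) / (Nat.choose n j : ℚ) := by
    refine (Finset.sum_subset (by gcongr <;> omega) ?_).symm
    intro x _ hx
    rw [Finset.mem_range, not_lt] at hx
    rw [Nat.choose_eq_zero_of_lt (by omega)]
    simp
  rw [h1]
  have hcnm : (Nat.choose n m : ℚ) ≠ 0 := by
    exact_mod_cast (Nat.choose_pos hmn).ne'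
  -- per-term identity
  have h2 : ∀ j ∈ Finset.range (m + 1),
      (Nat.choose m j : ℚ) / (Nat.choose n j : ℚ) =
      (Nat.choose (n - j) (n - m) : ℚ) / (Nat.choose n m : ℚ) := by
    intro j hj
    rw [Finset.mem_range] at hj
    have hjm : j ≤ m := Nat.lt_succ_iff.mp hj
    have hjn : j ≤ n := hjm.trans hmn
    have hcnj : (Nat.choose n j : ℚ) ≠ 0 := by
      exact_mod_cast (Nat.choose_pos hjn).ne'
    have key : Nat.choose n m * Nat.choose m j = Nat.choose n j * Nat.choose (n - j) (m - j) :=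
      Nat.choose_mul hjm
    have hsym : Nat.choose (n - j) (m - j) = Nat.choose (n - j) (n - m) := by
      rw [← Nat.choose_symm (by omega)]
      congr 1
      omega
    rw [hsym] at key
    have keyq : (Nat.choose n m : ℚ) * Nat.choose m j =
        Nat.choose n j * Nat.choose (n - j) (n - m) := by exact_mod_cast key
    field_simp
    linear_combination keyq
  rw [Finset.sum_congr rfl h2, ← Finset.sum_div]
  -- hockey stick
  have h3 : (∑ j ∈ Finset.range (m + 1), (Nat.choose (n - j) (n - m) : ℚ)) =
      (Nat.choose (n + 1) m : ℚ) := by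
    rw [← Nat.cast_sum]
    congr 1
    have hb : ∑ j ∈ Finset.range (m + 1), Nat.choose (n - j) (n - m) =
        ∑ i ∈ Finset.Icc (n - m) n, Nat.choose i (n - m) := by
      apply Finset.sum_nbij' (fun j => n - j) (fun i => n - i)
      · intro a ha; rw [Finset.mem_range] at ha; rw [Finset.mem_Icc]; omega
      · intro a ha; rw [Finset.mem_Icc] at ha; rw [Finset.mem_range]; omega
      · intro a ha; rw [Finset.mem_range] at ha; omega
      · intro a ha; rw [Finset.mem_Icc] at ha; omega
      · intro a ha; rfl
    rw [hb, Nat.sum_Icc_choose, ← Nat.choose_symm (by omega : n - m + 1 ≤ n + 1)]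
    congr 1
    omega
  rw [h3]
  -- final arithmetic
  have h4 : Nat.choose n m * (n + 1) = Nat.choose (n + 1) m * (n + 1 - m) :=
    Nat.choose_mul_succ_eq n m
  have h4q : (Nat.choose n m : ℚ) * ((n : ℚ) + 1) =
      (Nat.choose (n + 1) m : ℚ) * ((n : ℚ) + 1 - (m : ℚ)) := by
    have := congrArg (fun x : ℕ => (x : ℚ)) h4
    push_cast [Nat.cast_sub (by omega : m ≤ n + 1)] at this
    push_cast
    linarith
  push_cast
  have hne : (n : ℚ) + 1 - (m : ℚ) ≠ 0 := by
    have : (m : ℚ) ≤ (n : ℚ) := by exact_mod_cast hmn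
    linarith
  rw [show (n : ℚ) + 2 - ((m : ℚ) + 1) = (n : ℚ) + 1 - (m : ℚ) by ring,
    div_eq_div_iff hcnm hne]
  linear_combination -h4q
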